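/- Let N ≥ 1, let r ∈ ℝ^N with r ≠ 0, let λ ∈ ℝ, and let Λ be a real N×N positive semidefinite matrix with Λ.mulVec r = 0. Suppose the spectral gap condition holds: ⟪x, Λ.mulVec x⟫ > λ‖x‖² for every nonzero x ∈ ℝ^N with ⟪x, r⟫ = 0 (i.e., the smallest nonzero eigenvalue λ₁(Λ) exceeds λ). Set M := λ • (I − (r rᵀ)/‖r‖²) − Λ, where r rᵀ is the outer-product matrix and I the identity. Then −M is positive semidefinite, and M.mulVec x = 0 if and only if x = t • r for some t ∈ ℝ (so M has rank N − 1). -/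

import Mathlib

open Matrix

/-- Linearization of the normalized second-order flow at a DQE-metric under the spectral
gap condition `λ₁(Λ) > λ`: if `Λ` is positive semidefinite with `Λ r = 0` and
`⟪x, Λx⟫ > λ‖x‖²` for every nonzero `x ⊥ r`, then `M = λ(I - rrᵀ/‖r‖²) - Λ` satisfies:
`-M` is positive semidefinite and the kernel of `M` is exactly the span of `r`
(so `M` has rank `N - 1`). -/
theorem stmt_9 {N : ℕ} (hN : 1 ≤ N) (r : Fin N → ℝ) (hr : r ≠ 0)
    (lam : ℝ)
    (Λ : Matrix (Fin N) (Fin N) ℝ) (hΛ : Λ.PosSemidef) (hΛr : Λ.mulVec r = 0)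
    (hgap : ∀ x : Fin N → ℝ, x ≠ 0 → x ⬝ᵥ r = 0 → lam * (x ⬝ᵥ x) < x ⬝ᵥ Λ.mulVec x)
    (M : Matrix (Fin N) (Fin N) ℝ)
    (hM : M = lam • ((1 : Matrix (Fin N) (Fin N) ℝ) - (r ⬝ᵥ r)⁻¹ • vecMulVec r r) - Λ) :
    (-M).PosSemidef ∧ (∀ x : Fin N → ℝ, M.mulVec x = 0 ↔ ∃ t : ℝ, x = t • r) ∧
      M.rank = N - 1 := by
  have hsym : Λᵀ = Λ := hΛ.1
  have hs0 : 0 < r ⬝ᵥ r := by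
    rcases lt_or_eq_of_le (Finset.sum_nonneg fun i _ => mul_self_nonneg (r i) :
        (0:ℝ) ≤ r ⬝ᵥ r) with h | h
    · exact h
    · exact absurd (dotProduct_self_eq_zero.mp h.symm) hr
  have hs : r ⬝ᵥ r ≠ 0 := ne_of_gt hs0
  have hrΛ : ∀ w : Fin N → ℝ, r ⬝ᵥ Λ.mulVec w = 0 := by
    intro w
    rw [dotProduct_mulVec, ← mulVec_transpose, hsym, hΛr, zero_dotProduct]
  have houter : ∀ x : Fin N → ℝ, (vecMulVec r r).mulVec x = (r ⬝ᵥ x) • r := by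
    intro x
    ext i
    simp [vecMulVec, mulVec, dotProduct, Finset.mul_sum, mul_comm, mul_assoc, mul_left_comm]
  have hMvec : ∀ x : Fin N → ℝ,
      M.mulVec x = lam • x - (lam * ((r ⬝ᵥ r)⁻¹ * (r ⬝ᵥ x))) • r - Λ.mulVec x := by
    intro x
    rw [hM, sub_mulVec, smul_mulVec, sub_mulVec, one_mulVec, smul_mulVec, houter,
      smul_sub, smul_smul, smul_smul, mul_assoc]
  have hMr : M.mulVec r = 0 := by
    rw [hMvec, hΛr, inv_mul_cancel₀ hs]
    simp
  have hperp : ∀ x : Fin N → ℝ, (x - ((r ⬝ᵥ r)⁻¹ * (r ⬝ᵥ x)) • r) ⬝ᵥ r = 0 := by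
    intro x
    rw [sub_dotProduct, smul_dotProduct, smul_eq_mul, dotProduct_comm x r]
    field_simp
    ring
  have hquad : ∀ x : Fin N → ℝ,
      x ⬝ᵥ M.mulVec x =
        lam * ((x - ((r ⬝ᵥ r)⁻¹ * (r ⬝ᵥ x)) • r) ⬝ᵥ (x - ((r ⬝ᵥ r)⁻¹ * (r ⬝ᵥ x)) • r)) -
          (x - ((r ⬝ᵥ r)⁻¹ * (r ⬝ᵥ x)) • r) ⬝ᵥ Λ.mulVec (x - ((r ⬝ᵥ r)⁻¹ * (r ⬝ᵥ x)) • r) := by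
    intro x
    rw [hMvec]
    simp only [mulVec_sub, mulVec_smul, hΛr, smul_zero, sub_zero, dotProduct_sub,
      sub_dotProduct, dotProduct_smul, smul_dotProduct, smul_eq_mul, hrΛ, mul_zero,
      dotProduct_comm r x]
    field_simp
    ring
  have hkey : ∀ x : Fin N → ℝ, x ⬝ᵥ M.mulVec x ≤ 0 := by
    intro x
    rw [hquad x]
    set p := x - ((r ⬝ᵥ r)⁻¹ * (r ⬝ᵥ x)) • r with hpdef
    rcases eq_or_ne p 0 with hp | hp
    · simp [hp]
    · have := hgap p hp (hperp x)
      linarith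
  have hMsymm : Mᵀ = M := by
    rw [hM]
    simp only [transpose_sub, transpose_smul, transpose_one, hsym]
    congr 2
    ext i j
    simp [vecMulVec, mul_comm]
  have hherm : (-M).IsHermitian := by
    rw [Matrix.IsHermitian, conjTranspose_eq_transpose_of_trivial, transpose_neg, hMsymm]
  have hpsd : (-M).PosSemidef := by
    refine posSemidef_iff_dotProduct_mulVec.mpr ⟨hherm, fun x => ?_⟩
    have := hkey x
    simp only [neg_mulVec, dotProduct_neg]
    simpa using neg_nonneg.mpr this
  have hkernel : ∀ x : Fin N → ℝ, M.mulVec x = 0 ↔ ∃ t : ℝ, x = t • r := by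
    intro x
    constructor
    · intro h
      have h0 : x ⬝ᵥ M.mulVec x = 0 := by rw [h, dotProduct_zero]
      rw [hquad x] at h0
      set p := x - ((r ⬝ᵥ r)⁻¹ * (r ⬝ᵥ x)) • r with hpdef
      have hp0 : p = 0 := by
        by_contra hp
        have := hgap p hp (hperp x)
        linarith
      exact ⟨(r ⬝ᵥ r)⁻¹ * (r ⬝ᵥ x), by
        have := sub_eq_zero.mp hp0
        exact this⟩
    · rintro ⟨t, rfl⟩
      rw [mulVec_smul, hMr, smul_zero]
  refine ⟨hpsd, hkernel, ?_⟩
  have hker : LinearMap.ker M.mulVecLin = Submodule.span ℝ {r} := by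
    ext x
    rw [LinearMap.mem_ker, mulVecLin_apply, Submodule.mem_span_singleton, hkernel x]
    constructor
    · rintro ⟨t, ht⟩; exact ⟨t, ht.symm⟩
    · rintro ⟨t, ht⟩; exact ⟨t, ht.symm⟩
  have h1 : Module.finrank ℝ (LinearMap.ker M.mulVecLin) = 1 := by
    rw [hker]
    exact finrank_span_singleton hr
  have h2 := LinearMap.finrank_range_add_finrank_ker M.mulVecLin
  have h3 : Module.finrank ℝ (Fin N → ℝ) = N := Module.finrank_fin_fun ℝ
  have h4 : M.rank = Module.finrank ℝ (LinearMap.range M.mulVecLin) := rfl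
  omega
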